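/- In the field F_{16} = F_{2^4}, there exists a primitive element α such that α + α^{-1} is also primitive and Tr_{F_{16}/F_2}(α) = a, for every a ∈ F_2. -/

import Mathlib

set_option maxHeartbeats 1000000

private lemma key_F16 (g : GaloisField 2 4) (h15 : g ^ 15 = 1) (hg : g ^ 4 = g + 1)
    (hpow : ∀ β : GaloisField 2 4, β ≠ 0 → ∃ k : ℕ, g ^ k = β) (a : ZMod 2) :
    ∃ α : GaloisField 2 4, α ≠ 0 ∧
      (∀ β : GaloisField 2 4, β ≠ 0 → ∃ k : ℕ, α ^ k = β) ∧
      (∀ β : GaloisField 2 4, β ≠ 0 → ∃ k : ℕ, (α + α⁻¹) ^ k = β) ∧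
      Algebra.trace (ZMod 2) (GaloisField 2 4) α = a := by
  have h2 : (2 : GaloisField 2 4) = 0 := by exact_mod_cast CharP.cast_eq_zero (GaloisField 2 4) 2
  have hg0 : g ≠ 0 := by
    intro h; rw [h] at h15; simp at h15
  -- power identities
  have e4 : g ^ 4 = g + 1 := hg
  have e5 : g ^ 5 = g ^ 2 + g := by linear_combination (g) * hg
  have e6 : g ^ 6 = g ^ 3 + g ^ 2 := by linear_combination (g ^ 2) * hg
  have e7 : g ^ 7 = g ^ 3 + g + 1 := by linear_combination (g ^ 3 + 1) * hg
  have e8 : g ^ 8 = g ^ 2 + 1 := by linear_combination (g ^ 4 + g + 1) * hg + (g) * h2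
  have e9 : g ^ 9 = g ^ 3 + g := by
    linear_combination (g ^ 5 + g ^ 2 + g) * hg + (g ^ 2) * h2
  have e10 : g ^ 10 = g ^ 2 + g + 1 := by
    linear_combination (g ^ 6 + g ^ 3 + g ^ 2 + 1) * hg + (g ^ 3) * h2
  have e11 : g ^ 11 = g ^ 3 + g ^ 2 + g := by
    linear_combination (g ^ 7 + g ^ 4 + g ^ 3 + g + 2) * hg + (g + 1) * h2
  have e12 : g ^ 12 = g ^ 3 + g ^ 2 + g + 1 := by
    linear_combination (g ^ 8 + g ^ 5 + g ^ 4 + g ^ 2 + 2 * g + 1) * hg + (g ^ 2 + g) * h2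
  have e13 : g ^ 13 = g ^ 3 + g ^ 2 + 1 := by
    linear_combination (g ^ 9 + g ^ 6 + g ^ 5 + g ^ 3 + 2 * g ^ 2 + g + 1) * hg +
      (g ^ 3 + g ^ 2 + g) * h2
  have e14 : g ^ 14 = g ^ 3 + 1 := by
    linear_combination (g ^ 10 + g ^ 7 + g ^ 6 + g ^ 4 + 2 * g ^ 3 + g ^ 2 + g + 3) * hg +
      (g ^ 3 + g ^ 2 + 2 * g + 1) * h2
  -- the basis 1, g, g^2, g^3
  set v : Fin 4 → GaloisField 2 4 := ![1, g, g ^ 2, g ^ 3] with hv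
  have hv0 : v 0 = 1 := rfl
  have hv1 : v 1 = g := rfl
  have hv2 : v 2 = g ^ 2 := rfl
  have hv3 : v 3 = g ^ 3 := rfl
  have li : LinearIndependent (ZMod 2) v := by
    rw [Fintype.linearIndependent_iff]
    intro c hc
    rw [Fin.sum_univ_four, hv0, hv1, hv2, hv3] at hc
    have hzm : ∀ x : ZMod 2, x = 0 ∨ x = 1 := by decide
    rcases hzm (c 0) with d0 | d0 <;> rcases hzm (c 1) with d1 | d1 <;>
      rcases hzm (c 2) with d2 | d2 <;> rcases hzm (c 3) with d3 | d3 <;>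
      rw [d0, d1, d2, d3] at hc <;>
      simp only [zero_smul, one_smul, zero_add, add_zero] at hc
    · intro i; fin_cases i <;> first | exact d0 | exact d1 | exact d2 | exact d3
    · exact absurd (show g ^ 3 = 0 by linear_combination hc) (pow_ne_zero 3 hg0)
    · exact absurd (show g ^ 2 = 0 by linear_combination hc) (pow_ne_zero 2 hg0)
    · exact absurd (show g ^ 6 = 0 by linear_combination hc + e6) (pow_ne_zero 6 hg0)
    · exact absurd (show g ^ 1 = 0 by linear_combination hc) (pow_ne_zero 1 hg0)
    · exact absurd (show g ^ 9 = 0 by linear_combination hc + e9) (pow_ne_zero 9 hg0)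
    · exact absurd (show g ^ 5 = 0 by linear_combination hc + e5) (pow_ne_zero 5 hg0)
    · exact absurd (show g ^ 11 = 0 by linear_combination hc + e11) (pow_ne_zero 11 hg0)
    · exact absurd (show g ^ 0 = 0 by linear_combination hc) (pow_ne_zero 0 hg0)
    · exact absurd (show g ^ 14 = 0 by linear_combination hc + e14) (pow_ne_zero 14 hg0)
    · exact absurd (show g ^ 8 = 0 by linear_combination hc + e8) (pow_ne_zero 8 hg0)
    · exact absurd (show g ^ 13 = 0 by linear_combination hc + e13) (pow_ne_zero 13 hg0)
    · exact absurd (show g ^ 4 = 0 by linear_combination hc + e4) (pow_ne_zero 4 hg0)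
    · exact absurd (show g ^ 7 = 0 by linear_combination hc + e7) (pow_ne_zero 7 hg0)
    · exact absurd (show g ^ 10 = 0 by linear_combination hc + e10) (pow_ne_zero 10 hg0)
    · exact absurd (show g ^ 12 = 0 by linear_combination hc + e12) (pow_ne_zero 12 hg0)
  have hsp : ⊤ ≤ Submodule.span (ZMod 2) (Set.range v) := by
    set S := Submodule.span (ZMod 2) (Set.range v) with hS
    have m0 : (1 : GaloisField 2 4) ∈ S := Submodule.subset_span ⟨0, rfl⟩
    have m1 : g ∈ S := Submodule.subset_span ⟨1, rfl⟩
    have m2 : g ^ 2 ∈ S := Submodule.subset_span ⟨2, rfl⟩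
    have m3 : g ^ 3 ∈ S := Submodule.subset_span ⟨3, rfl⟩
    have hmul : ∀ x ∈ S, g * x ∈ S := by
      intro x hx
      induction hx using Submodule.span_induction with
      | mem y hy =>
        obtain ⟨i, rfl⟩ := hy
        fin_cases i
        · show g * v 0 ∈ S; rw [hv0, mul_one]; exact m1
        · show g * v 1 ∈ S; rw [hv1, show g * g = g ^ 2 by ring]; exact m2
        · show g * v 2 ∈ S; rw [hv2, show g * g ^ 2 = g ^ 3 by ring]; exact m3
        · show g * v 3 ∈ S; rw [hv3, show g * g ^ 3 = g + 1 by linear_combination hg]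
          exact add_mem m1 m0
      | zero => rw [mul_zero]; exact zero_mem S
      | add y z _ _ hy hz => rw [mul_add]; exact add_mem hy hz
      | smul t y _ hy => rw [mul_smul_comm]; exact Submodule.smul_mem S t hy
    have hpows : ∀ k : ℕ, g ^ k ∈ S := by
      intro k
      induction k with
      | zero => rw [pow_zero]; exact m0
      | succ n ih => rw [pow_succ, mul_comm]; exact hmul _ ih
    intro β _
    by_cases hβ : β = 0
    · rw [hβ]; exact zero_mem S
    · obtain ⟨k, hk⟩ := hpow β hβ
      rw [← hk]; exact hpows k
  set b : Module.Basis (Fin 4) (ZMod 2) (GaloisField 2 4) := Module.Basis.mk li hsp with hb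
  have hbv : ∀ i, b i = v i := fun i => Module.Basis.mk_apply li hsp i
  have hb0 : b 0 = 1 := hbv 0
  have hb1 : b 1 = g := hbv 1
  have hb2 : b 2 = g ^ 2 := hbv 2
  have hb3 : b 3 = g ^ 3 := hbv 3
  have htr : ∀ x : GaloisField 2 4, Algebra.trace (ZMod 2) (GaloisField 2 4) x =
      b.repr (x * b 0) 0 + b.repr (x * b 1) 1 + b.repr (x * b 2) 2 + b.repr (x * b 3) 3 := by
    intro x
    rw [Algebra.trace_eq_matrix_trace b x, Matrix.trace]
    simp [Matrix.diag, Fin.sum_univ_four, Algebra.leftMulMatrix_eq_repr_mul]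
  have h91 : (g ^ 7) ^ 13 = g := by
    have : ((g : GaloisField 2 4) ^ 7) ^ 13 = (g ^ 15) ^ 6 * g := by ring
    rw [this, h15, one_pow, one_mul]
  fin_cases a
  · -- a = 0 : take α = g
    refine ⟨g, hg0, hpow, ?_, ?_⟩
    · have hinv : g⁻¹ = g ^ 14 := inv_eq_of_mul_eq_one_right (by
        have : g * g ^ 14 = g ^ 15 := by ring
        rw [this, h15])
      have hA : g + g⁻¹ = g ^ 7 := by
        rw [hinv]; linear_combination e14 - e7
      intro β hβ
      obtain ⟨k, hk⟩ := hpow β hβ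
      exact ⟨13 * k, by rw [hA, pow_mul, h91, hk]⟩
    · rw [htr g]
      have r0 : b.repr (g * b 0) 0 = 0 := by
        rw [show g * b 0 = b 1 by rw [hb0, hb1]; ring]
        simp [Module.Basis.repr_self, Finsupp.single_apply]
      have r1 : b.repr (g * b 1) 1 = 0 := by
        rw [show g * b 1 = b 2 by rw [hb1, hb2]; ring]
        simp [Module.Basis.repr_self, Finsupp.single_apply]
      have r2 : b.repr (g * b 2) 2 = 0 := by
        rw [show g * b 2 = b 3 by rw [hb2, hb3]; ring]
        simp [Module.Basis.repr_self, Finsupp.single_apply]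
      have r3 : b.repr (g * b 3) 3 = 0 := by
        rw [show g * b 3 = b 0 + b 1 by rw [hb0, hb1, hb3]; linear_combination hg]
        simp [Module.Basis.repr_self, Finsupp.single_apply]
      rw [r0, r1, r2, r3]
      rfl
  · -- a = 1 : take α = g ^ 7
    have h121 : (g ^ 11) ^ 11 = g := by
      have : ((g : GaloisField 2 4) ^ 11) ^ 11 = (g ^ 15) ^ 8 * g := by ring
      rw [this, h15, one_pow, one_mul]
    refine ⟨g ^ 7, pow_ne_zero 7 hg0, ?_, ?_, ?_⟩
    · intro β hβ
      obtain ⟨k, hk⟩ := hpow β hβ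
      exact ⟨13 * k, by rw [pow_mul, h91, hk]⟩
    · have hinv : (g ^ 7)⁻¹ = g ^ 8 := inv_eq_of_mul_eq_one_right (by
        have : g ^ 7 * g ^ 8 = g ^ 15 := by ring
        rw [this, h15])
      have hA : g ^ 7 + (g ^ 7)⁻¹ = g ^ 11 := by
        rw [hinv]; linear_combination e7 + e8 - e11 + h2
      intro β hβ
      obtain ⟨k, hk⟩ := hpow β hβ
      exact ⟨11 * k, by rw [hA, pow_mul, h121, hk]⟩
    · rw [htr (g ^ 7)]
      have r0 : b.repr (g ^ 7 * b 0) 0 = 1 := by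
        rw [show g ^ 7 * b 0 = b 0 + b 1 + b 3 by
          rw [hb0, hb1, hb3]; linear_combination e7]
        simp [Module.Basis.repr_self, Finsupp.single_apply]
      have r1 : b.repr (g ^ 7 * b 1) 1 = 0 := by
        rw [show g ^ 7 * b 1 = b 0 + b 2 by
          rw [hb0, hb1, hb2]; linear_combination e8]
        simp [Module.Basis.repr_self, Finsupp.single_apply]
      have r2 : b.repr (g ^ 7 * b 2) 2 = 0 := by
        rw [show g ^ 7 * b 2 = b 1 + b 3 by
          rw [hb1, hb2, hb3]; linear_combination e9]
        simp [Module.Basis.repr_self, Finsupp.single_apply]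
      have r3 : b.repr (g ^ 7 * b 3) 3 = 0 := by
        rw [show g ^ 7 * b 3 = b 0 + b 1 + b 2 by
          rw [hb0, hb1, hb2, hb3]; linear_combination e10]
        simp [Module.Basis.repr_self, Finsupp.single_apply]
      rw [r0, r1, r2, r3]
      rfl

theorem primitive_pair_with_trace_F16 (a : ZMod 2) :
    ∃ α : GaloisField 2 4, α ≠ 0 ∧
      (∀ β : GaloisField 2 4, β ≠ 0 → ∃ k : ℕ, α ^ k = β) ∧
      (∀ β : GaloisField 2 4, β ≠ 0 → ∃ k : ℕ, (α + α⁻¹) ^ k = β) ∧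
      Algebra.trace (ZMod 2) (GaloisField 2 4) α = a := by
  set F := GaloisField 2 4 with hF
  have h2 : (2 : F) = 0 := by exact_mod_cast CharP.cast_eq_zero F 2
  obtain ⟨ζ, hζ⟩ := IsCyclic.exists_generator (α := Fˣ)
  have hcard : Nat.card F = 16 := GaloisField.card 2 4 (by norm_num)
  have hord : orderOf ζ = 15 := by
    rw [orderOf_eq_card_of_forall_mem_zpowers hζ, Nat.card_units, hcard]
  set g : F := (ζ : F) with hgdef
  have h15 : g ^ 15 = 1 := by
    have h : ζ ^ 15 = 1 := by rw [← hord]; exact pow_orderOf_eq_one ζ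
    rw [hgdef, ← Units.val_pow_eq_pow_val, h, Units.val_one]
  have hpow : ∀ β : F, β ≠ 0 → ∃ k : ℕ, g ^ k = β := by
    intro β hβ
    have hu := hζ (Units.mk0 β hβ)
    rw [← mem_powers_iff_mem_zpowers] at hu
    obtain ⟨k, hk⟩ := hu
    refine ⟨k, ?_⟩
    rw [hgdef, ← Units.val_pow_eq_pow_val]
    exact congrArg Units.val hk
  have hordpow : ∀ m : ℕ, g ^ m = 1 → (15 : ℕ) ∣ m := by
    intro m hm
    have h : ζ ^ m = 1 := Units.ext (by
      rw [Units.val_pow_eq_pow_val, Units.val_one, ← hgdef]; exact hm)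
    rw [← hord]; exact orderOf_dvd_of_pow_eq_one h
  have hg3 : g ^ 3 ≠ 1 := fun h => by have := hordpow 3 h; norm_num at this
  have hg5 : g ^ 5 ≠ 1 := fun h => by have := hordpow 5 h; norm_num at this
  have hprod : (g + 1) * (g ^ 2 + g + 1) * (g ^ 4 + g + 1) * (g ^ 4 + g ^ 3 + 1) *
      (g ^ 4 + g ^ 3 + g ^ 2 + g + 1) = 0 := by
    linear_combination h15 + (2 * g ^ 14 + 4 * g ^ 13 + 6 * g ^ 12 + 9 * g ^ 11 + 13 * g ^ 10 +
      16 * g ^ 9 + 17 * g ^ 8 + 17 * g ^ 7 + 16 * g ^ 6 + 13 * g ^ 5 + 9 * g ^ 4 + 6 * g ^ 3 +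
      4 * g ^ 2 + 2 * g + 1) * h2
  have hne1 : g + 1 ≠ 0 := fun h =>
    hg3 (by linear_combination (g ^ 2 - g + 1) * h - h2)
  have hne2 : g ^ 2 + g + 1 ≠ 0 := fun h =>
    hg3 (by linear_combination (g - 1) * h)
  have hne3 : g ^ 4 + g ^ 3 + g ^ 2 + g + 1 ≠ 0 := fun h =>
    hg5 (by linear_combination (g - 1) * h)
  rcases mul_eq_zero.1 hprod with h | h
  on_goal 2 => exact absurd h hne3
  rcases mul_eq_zero.1 h with h | hB
  · rcases mul_eq_zero.1 h with h | hA
    · rcases mul_eq_zero.1 h with h | h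
      · exact absurd h hne1
      · exact absurd h hne2
    · -- case A : g ^ 4 = g + 1
      exact key_F16 g h15 (by linear_combination hA - (g + 1) * h2) hpow a
  · -- case B : use g ^ 14
    have h15' : (g ^ 14) ^ 15 = 1 := by
      have : ((g : F) ^ 14) ^ 15 = (g ^ 15) ^ 14 := by ring
      rw [this, h15, one_pow]
    have hg' : (g ^ 14) ^ 4 = g ^ 14 + 1 := by
      linear_combination (g ^ 41 + g ^ 26 + g ^ 11) * h15 +
        (-g ^ 10 + g ^ 9 - g ^ 8 + 2 * g ^ 7 - g ^ 6 + g ^ 4 - 3 * g ^ 3 + 4 * g ^ 2 -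
          4 * g + 3) * hB + (-2 * g ^ 2 + 2 * g - 2) * h2
    have h196 : (g ^ 14) ^ 14 = g := by
      have : ((g : F) ^ 14) ^ 14 = (g ^ 15) ^ 13 * g := by ring
      rw [this, h15, one_pow, one_mul]
    have hpow' : ∀ β : F, β ≠ 0 → ∃ k : ℕ, (g ^ 14) ^ k = β := by
      intro β hβ
      obtain ⟨k, hk⟩ := hpow β hβ
      exact ⟨14 * k, by rw [pow_mul, h196, hk]⟩
    exact key_F16 (g ^ 14) h15' hg' hpow' a
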